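/- arXiv:1805.09480 — 8 statements merged into one kernel-verified Lean document; each statement's English description precedes it below -/
import Mathlib

section
/- If F : [0,1]ⁿ → ℝ is twice continuously differentiable, then F is continuous submodular (i.e., F(x) + F(y) ≥ F(x ∨ y) + F(x ∧ y) for all x, y, where ∨ and ∧ are coordinatewise max and min) if and only if all off-diagonal entries of the Hessian of F are nonpositive everywhere on (0,1)ⁿ. -/
open Set

namespace Stmt3Aux

variable {n : ℕ}

lemma hasDerivAt_line {𝔼 : Type*} [NormedAddCommGroup 𝔼] [NormedSpace ℝ 𝔼]
    {G : (Fin n → ℝ) → 𝔼} (hG : Differentiable ℝ G) (c d : Fin n → ℝ) (t : ℝ) :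
    HasDerivAt (fun s => G (c + s • d)) (fderiv ℝ G (c + t • d) d) t := by
  have h1 : HasDerivAt (fun s : ℝ => c + s • d) d t := by
    simpa using ((hasDerivAt_id t).smul_const d).const_add c
  exact ((hG _).hasFDerivAt).comp_hasDerivAt t h1

lemma hasFDerivAt_clm_apply {G : (Fin n → ℝ) → ((Fin n → ℝ) →L[ℝ] ℝ)} {x : Fin n → ℝ}
    (hG : Differentiable ℝ G) (c : Fin n → ℝ) :
    HasFDerivAt (fun y => G y c) ((ContinuousLinearMap.apply ℝ ℝ c).comp (fderiv ℝ G x)) x :=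
  ((ContinuousLinearMap.apply ℝ ℝ c).hasFDerivAt).comp x (hG x).hasFDerivAt

lemma fderiv_clm_apply' {G : (Fin n → ℝ) → ((Fin n → ℝ) →L[ℝ] ℝ)} {x : Fin n → ℝ}
    (hG : Differentiable ℝ G) (c w : Fin n → ℝ) :
    fderiv ℝ (fun y => G y c) x w = fderiv ℝ G x w c := by
  rw [(hasFDerivAt_clm_apply hG c).fderiv]; rfl

lemma sum_single (u : Fin n → ℝ) : ∑ i, u i • (Pi.single i 1 : Fin n → ℝ) = u := by
  funext k
  simp [Finset.sum_apply, Pi.single_apply]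

lemma bilin_expand (B : (Fin n → ℝ) →L[ℝ] (Fin n → ℝ) →L[ℝ] ℝ) (u v : Fin n → ℝ) :
    B u v = ∑ i, ∑ j, u i * v j * B (Pi.single i 1) (Pi.single j 1) := by
  conv_lhs => rw [← sum_single u, ← sum_single v]
  simp only [map_sum, map_smul, ContinuousLinearMap.coe_sum', Finset.sum_apply,
    ContinuousLinearMap.coe_smul', Pi.smul_apply, smul_eq_mul, Finset.mul_sum]
  rw [Finset.sum_comm]
  exact Finset.sum_congr rfl fun i _ => Finset.sum_congr rfl fun j _ => by ring


variable {F : (Fin n → ℝ) → ℝ}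

lemma diff1 (hF : ContDiff ℝ 2 F) : Differentiable ℝ F := hF.differentiable (by norm_num)

lemma diff2 (hF : ContDiff ℝ 2 F) : Differentiable ℝ (fderiv ℝ F) :=
  (hF.fderiv_right (m := 1) (by norm_num)).differentiable one_ne_zero

lemma cont2 (hF : ContDiff ℝ 2 F) : Continuous (fderiv ℝ (fderiv ℝ F)) :=
  ((hF.fderiv_right (m := 1) (by norm_num)).fderiv_right (m := 0) (by norm_num)).continuous

lemma mvt2 (hF : ContDiff ℝ 2 F) (a : Fin n → ℝ) (i j : Fin n)
    {p q : ℝ} (hp : 0 < p) (hq : 0 < q) :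
    ∃ s ∈ Ioo 0 p, ∃ t ∈ Ioo 0 q,
      F (a + p • (Pi.single i 1 : Fin n → ℝ) + q • (Pi.single j 1 : Fin n → ℝ))
        - F (a + p • (Pi.single i 1 : Fin n → ℝ))
        - F (a + q • (Pi.single j 1 : Fin n → ℝ)) + F a
      = p * q * fderiv ℝ (fderiv ℝ F)
          (a + s • (Pi.single i 1 : Fin n → ℝ) + t • (Pi.single j 1 : Fin n → ℝ))
          (Pi.single j 1) (Pi.single i 1) := by
  have hd1 := diff1 hF
  have hd2 := diff2 hF
  set ei : Fin n → ℝ := Pi.single i 1 with hei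
  set ej : Fin n → ℝ := Pi.single j 1 with hej
  set φ : ℝ → ℝ := fun s => F ((a + q • ej) + s • ei) - F (a + s • ei) with hφ
  have hφd : ∀ s : ℝ, HasDerivAt φ
      (fderiv ℝ F ((a + q • ej) + s • ei) ei - fderiv ℝ F (a + s • ei) ei) s :=
    fun s => (hasDerivAt_line hd1 _ ei s).sub (hasDerivAt_line hd1 a ei s)
  obtain ⟨s, hs, hseq⟩ := exists_hasDerivAt_eq_slope φ _ hp
    (fun s _ => (hφd s).differentiableAt.continuousAt.continuousWithinAt)
    (fun s _ => hφd s)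
  set ψ : ℝ → ℝ := fun t => fderiv ℝ F ((a + s • ei) + t • ej) ei with hψ
  have hGdiff : Differentiable ℝ (fun y => fderiv ℝ F y ei) := fun y =>
    (hasFDerivAt_clm_apply hd2 ei).differentiableAt
  have hψd : ∀ t : ℝ, HasDerivAt ψ
      (fderiv ℝ (fderiv ℝ F) ((a + s • ei) + t • ej) ej ei) t := by
    intro t
    have h := hasDerivAt_line hGdiff (a + s • ei) ej t
    rwa [fderiv_clm_apply' hd2 ei ej] at h
  obtain ⟨t, ht, hteq⟩ := exists_hasDerivAt_eq_slope ψ _ hq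
    (fun t _ => (hψd t).differentiableAt.continuousAt.continuousWithinAt)
    (fun t _ => hψd t)
  refine ⟨s, hs, t, ht, ?_⟩
  simp only [sub_zero] at hseq hteq
  have h1 : φ p - φ 0 = (fderiv ℝ F ((a + q • ej) + s • ei) ei - fderiv ℝ F (a + s • ei) ei) * p := by
    rw [hseq]; field_simp
  have h3 : fderiv ℝ F ((a + q • ej) + s • ei) ei - fderiv ℝ F (a + s • ei) ei = ψ q - ψ 0 := by
    simp only [hψ]
    rw [add_right_comm a (q • ej), zero_smul, add_zero]
  have h2 : ψ q - ψ 0 = fderiv ℝ (fderiv ℝ F) ((a + s • ei) + t • ej) ej ei * q := by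
    rw [hteq]; field_simp
  rw [h3, h2] at h1
  have hφp : φ p = F (a + p • ei + q • ej) - F (a + p • ei) := by
    simp only [hφ]; rw [add_right_comm a (q • ej)]
  have hφ0 : φ 0 = F (a + q • ej) - F a := by simp [hφ]
  rw [hφp, hφ0] at h1
  linear_combination h1


lemma forward (hF : ContDiff ℝ 2 F)
    (hsub : ∀ x y : Fin n → ℝ, x ∈ Icc (0:Fin n → ℝ) 1 → y ∈ Icc (0:Fin n → ℝ) 1 →
      F x + F y ≥ F (x ⊔ y) + F (x ⊓ y)) :
    ∀ x ∈ Icc (0:Fin n → ℝ) 1, ∀ i j : Fin n, i ≠ j →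
      fderiv ℝ (fderiv ℝ F) x (Pi.single j 1) (Pi.single i 1) ≤ 0 := by
  intro x hx i j hij
  by_contra hpos
  push_neg at hpos
  have hx0 : ∀ k, 0 ≤ x k := fun k => by simpa using (Pi.le_def.1 hx.1) k
  have hx1 : ∀ k, x k ≤ 1 := fun k => by simpa using (Pi.le_def.1 hx.2) k
  have hcont : Continuous fun z => fderiv ℝ (fderiv ℝ F) z (Pi.single j 1) (Pi.single i 1) :=
    (ContinuousLinearMap.apply ℝ ℝ (Pi.single i 1)).continuous.comp
      ((ContinuousLinearMap.apply ℝ ((Fin n → ℝ) →L[ℝ] ℝ) (Pi.single j 1)).continuous.comp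
        (cont2 hF))
  have hopen : IsOpen {z : Fin n → ℝ |
      0 < fderiv ℝ (fderiv ℝ F) z (Pi.single j 1) (Pi.single i 1)} :=
    isOpen_lt continuous_const hcont
  obtain ⟨δ, hδ0, hball⟩ := Metric.isOpen_iff.1 hopen x hpos
  set ε : ℝ := min (δ/2) (1/2) with hεdef
  have hε0 : 0 < ε := lt_min (by linarith) (by norm_num)
  have hεδ : ε ≤ δ/2 := min_le_left _ _
  have hεh : ε ≤ 1/2 := min_le_right _ _
  set αi : ℝ := if x i ≤ 1/2 then 0 else ε with hαi
  set αj : ℝ := if x j ≤ 1/2 then 0 else ε with hαj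
  have hαi01 : 0 ≤ αi ∧ αi ≤ ε := by rw [hαi]; split_ifs <;> constructor <;> linarith
  have hαj01 : 0 ≤ αj ∧ αj ≤ ε := by rw [hαj]; split_ifs <;> constructor <;> linarith
  have hαiv : (x i ≤ 1/2 ∧ αi = 0) ∨ (1/2 < x i ∧ αi = ε) := by
    rw [hαi]; split_ifs with h
    · exact Or.inl ⟨h, rfl⟩
    · exact Or.inr ⟨not_le.1 h, rfl⟩
  have hαjv : (x j ≤ 1/2 ∧ αj = 0) ∨ (1/2 < x j ∧ αj = ε) := by
    rw [hαj]; split_ifs with h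
    · exact Or.inl ⟨h, rfl⟩
    · exact Or.inr ⟨not_le.1 h, rfl⟩
  set a : Fin n → ℝ := x - αi • (Pi.single i 1 : Fin n → ℝ)
      - αj • (Pi.single j 1 : Fin n → ℝ) with ha
  have hcoord : ∀ (c d : ℝ) (k : Fin n),
      (a + c • (Pi.single i 1 : Fin n → ℝ) + d • (Pi.single j 1 : Fin n → ℝ)) k
        = if k = i then x i - αi + c else if k = j then x j - αj + d else x k := by
    intro c d k
    simp only [ha, Pi.add_apply, Pi.sub_apply, Pi.smul_apply, smul_eq_mul]
    rcases eq_or_ne k i with rfl | hki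
    · rw [Pi.single_eq_same, Pi.single_eq_of_ne hij, if_pos rfl]; ring
    · rcases eq_or_ne k j with rfl | hkj
      · rw [Pi.single_eq_same, Pi.single_eq_of_ne hij.symm, if_neg hki, if_pos rfl]; ring
      · rw [Pi.single_eq_of_ne hki, Pi.single_eq_of_ne hkj, if_neg hki, if_neg hkj]; ring
  have hmem : ∀ c d : ℝ, 0 ≤ c → c ≤ ε → 0 ≤ d → d ≤ ε →
      a + c • (Pi.single i 1 : Fin n → ℝ) + d • (Pi.single j 1 : Fin n → ℝ)
        ∈ Icc (0:Fin n → ℝ) 1 := by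
    intro c d hc0 hcε hd0 hdε
    constructor <;> rw [Pi.le_def] <;> intro k <;>
      simp only [Pi.zero_apply, Pi.one_apply, hcoord c d k] <;> split_ifs with h1 h2
    · rcases hαiv with ⟨hv1, hv2⟩ | ⟨hv1, hv2⟩ <;> rw [hv2] <;> subst h1 <;> linarith [hx0 k]
    · rcases hαjv with ⟨hv1, hv2⟩ | ⟨hv1, hv2⟩ <;> rw [hv2] <;> subst h2 <;> linarith [hx0 k]
    · linarith [hx0 k]
    · rcases hαiv with ⟨hv1, hv2⟩ | ⟨hv1, hv2⟩ <;> rw [hv2] <;> subst h1 <;> linarith [hx1 k]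
    · rcases hαjv with ⟨hv1, hv2⟩ | ⟨hv1, hv2⟩ <;> rw [hv2] <;> subst h2 <;> linarith [hx1 k]
    · linarith [hx1 k]
  obtain ⟨s, hs, t, ht, heq⟩ := mvt2 (F := F) hF a i j hε0 hε0
  obtain ⟨hs1, hs2⟩ := hs
  obtain ⟨ht1, ht2⟩ := ht
  obtain ⟨hαi1, hαi2⟩ := hαi01
  obtain ⟨hαj1, hαj2⟩ := hαj01
  have hξ : a + s • (Pi.single i 1 : Fin n → ℝ) + t • (Pi.single j 1 : Fin n → ℝ)
      ∈ Metric.ball x δ := by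
    rw [Metric.mem_ball, dist_pi_lt_iff hδ0]
    intro k
    rw [Real.dist_eq, hcoord s t k]
    split_ifs with h1 h2
    · subst h1; rw [abs_lt]; constructor <;> linarith
    · subst h2; rw [abs_lt]; constructor <;> linarith
    · simpa using hδ0
  have hgt : (0:ℝ) < fderiv ℝ (fderiv ℝ F)
      (a + s • (Pi.single i 1 : Fin n → ℝ) + t • (Pi.single j 1 : Fin n → ℝ))
      (Pi.single j 1) (Pi.single i 1) := hball hξ
  have hDpos : 0 < F (a + ε • (Pi.single i 1 : Fin n → ℝ) + ε • (Pi.single j 1 : Fin n → ℝ))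
      - F (a + ε • (Pi.single i 1 : Fin n → ℝ))
      - F (a + ε • (Pi.single j 1 : Fin n → ℝ)) + F a := by
    rw [heq]; positivity
  have hm1 : a + ε • (Pi.single i 1 : Fin n → ℝ) ∈ Icc (0:Fin n → ℝ) 1 := by
    have h := hmem ε 0 hε0.le le_rfl le_rfl hε0.le
    simpa using h
  have hm2 : a + ε • (Pi.single j 1 : Fin n → ℝ) ∈ Icc (0:Fin n → ℝ) 1 := by
    have h := hmem 0 ε le_rfl hε0.le hε0.le le_rfl
    simpa using h
  have hsup : (a + ε • (Pi.single i 1 : Fin n → ℝ)) ⊔ (a + ε • (Pi.single j 1 : Fin n → ℝ))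
      = a + ε • (Pi.single i 1 : Fin n → ℝ) + ε • (Pi.single j 1 : Fin n → ℝ) := by
    funext k
    simp only [Pi.sup_apply, Pi.add_apply, Pi.smul_apply, smul_eq_mul]
    rcases eq_or_ne k i with rfl | hki
    · rw [Pi.single_eq_same, Pi.single_eq_of_ne hij]
      rw [sup_eq_left.2 (by linarith : a k + ε * 0 ≤ a k + ε * 1)]; ring
    · rcases eq_or_ne k j with rfl | hkj
      · rw [Pi.single_eq_same, Pi.single_eq_of_ne hij.symm]
        rw [sup_eq_right.2 (by linarith : a k + ε * 0 ≤ a k + ε * 1)]; ring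
      · rw [Pi.single_eq_of_ne hki, Pi.single_eq_of_ne hkj, sup_idem]; ring
  have hinf : (a + ε • (Pi.single i 1 : Fin n → ℝ)) ⊓ (a + ε • (Pi.single j 1 : Fin n → ℝ))
      = a := by
    funext k
    simp only [Pi.inf_apply, Pi.add_apply, Pi.smul_apply, smul_eq_mul]
    rcases eq_or_ne k i with rfl | hki
    · rw [Pi.single_eq_same, Pi.single_eq_of_ne hij]
      rw [inf_eq_right.2 (by linarith : a k + ε * 0 ≤ a k + ε * 1)]; ring
    · rcases eq_or_ne k j with rfl | hkj
      · rw [Pi.single_eq_same, Pi.single_eq_of_ne hij.symm]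
        rw [inf_eq_left.2 (by linarith : a k + ε * 0 ≤ a k + ε * 1)]; ring
      · rw [Pi.single_eq_of_ne hki, Pi.single_eq_of_ne hkj, inf_idem]; ring
  have hs2' := hsub _ _ hm1 hm2
  rw [hsup, hinf] at hs2'
  linarith


lemma reverse (hF : ContDiff ℝ 2 F)
    (hH : ∀ z ∈ Icc (0:Fin n → ℝ) 1, ∀ i j : Fin n, i ≠ j →
      fderiv ℝ (fderiv ℝ F) z (Pi.single j 1) (Pi.single i 1) ≤ 0)
    {x y : Fin n → ℝ} (hx : x ∈ Icc (0:Fin n → ℝ) 1) (hy : y ∈ Icc (0:Fin n → ℝ) 1) :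
    F x + F y ≥ F (x ⊔ y) + F (x ⊓ y) := by
  have hd1 := diff1 hF
  have hd2 := diff2 hF
  have hx0 : ∀ k, 0 ≤ x k := fun k => by simpa using (Pi.le_def.1 hx.1) k
  have hx1 : ∀ k, x k ≤ 1 := fun k => by simpa using (Pi.le_def.1 hx.2) k
  have hy0 : ∀ k, 0 ≤ y k := fun k => by simpa using (Pi.le_def.1 hy.1) k
  have hy1 : ∀ k, y k ≤ 1 := fun k => by simpa using (Pi.le_def.1 hy.2) k
  set p : Fin n → ℝ := x ⊓ y with hp
  set u : Fin n → ℝ := x - p with hu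
  set v : Fin n → ℝ := y - p with hv
  have hxp : x = p + u := by rw [hu]; abel
  have hyp : y = p + v := by rw [hv]; abel
  have hu0 : ∀ k, 0 ≤ u k := fun k => by
    simp only [hu, hp, Pi.sub_apply, Pi.inf_apply, sub_nonneg]; exact inf_le_left
  have hv0 : ∀ k, 0 ≤ v k := fun k => by
    simp only [hv, hp, Pi.sub_apply, Pi.inf_apply, sub_nonneg]; exact inf_le_right
  have huv : ∀ k, u k * v k = 0 := by
    intro k
    simp only [hu, hv, hp, Pi.sub_apply, Pi.inf_apply]
    rcases le_total (x k) (y k) with h | h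
    · rw [inf_eq_left.2 h]; ring
    · rw [inf_eq_right.2 h]; ring
  have hsupv : x ⊔ y = p + u + v := by
    funext k
    simp only [Pi.sup_apply, Pi.add_apply, hu, hv, hp, Pi.sub_apply, Pi.inf_apply]
    rcases le_total (x k) (y k) with h | h
    · rw [sup_eq_right.2 h, inf_eq_left.2 h]; ring
    · rw [sup_eq_left.2 h, inf_eq_right.2 h]; ring
  have hp0 : ∀ k, 0 ≤ p k := fun k => by
    simp only [hp, Pi.inf_apply]; exact le_inf (hx0 k) (hy0 k)
  have hsup1 : ∀ k, p k + u k + v k ≤ 1 := by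
    intro k
    have : (x ⊔ y) k = p k + u k + v k := by rw [hsupv]; rfl
    rw [← this]
    simp only [Pi.sup_apply]
    exact sup_le (hx1 k) (hy1 k)
  have hmem : ∀ s t : ℝ, 0 ≤ s → s ≤ 1 → 0 ≤ t → t ≤ 1 →
      p + s • u + t • v ∈ Icc (0:Fin n → ℝ) 1 := by
    intro s t hs0 hs1 ht0 ht1
    constructor <;> rw [Pi.le_def] <;> intro k <;>
      simp only [Pi.zero_apply, Pi.one_apply, Pi.add_apply, Pi.smul_apply, smul_eq_mul]
    · have := mul_nonneg hs0 (hu0 k)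
      have := mul_nonneg ht0 (hv0 k)
      linarith [hp0 k]
    · have h1 : s * u k ≤ u k := mul_le_of_le_one_left (hu0 k) hs1
      have h2 : t * v k ≤ v k := mul_le_of_le_one_left (hv0 k) ht1
      linarith [hsup1 k]
  have hB : ∀ z ∈ Icc (0:Fin n → ℝ) 1, fderiv ℝ (fderiv ℝ F) z u v ≤ 0 := by
    intro z hz
    rw [bilin_expand]
    refine Finset.sum_nonpos fun i _ => Finset.sum_nonpos fun j _ => ?_
    rcases eq_or_ne i j with rfl | hij
    · rw [huv i, zero_mul]
    · exact mul_nonpos_of_nonneg_of_nonpos (mul_nonneg (hu0 i) (hv0 j))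
        (hH z hz j i hij.symm)
  have hGdiff : Differentiable ℝ (fun z => fderiv ℝ F z v) := fun z =>
    (hasFDerivAt_clm_apply hd2 v).differentiableAt
  have hkd : ∀ (t s : ℝ), HasDerivAt (fun s => fderiv ℝ F ((p + t • v) + s • u) v)
      (fderiv ℝ (fderiv ℝ F) ((p + t • v) + s • u) u v) s := by
    intro t s
    have h := hasDerivAt_line hGdiff (p + t • v) u s
    rwa [fderiv_clm_apply' hd2 v u] at h
  have hh' : ∀ t : ℝ, 0 ≤ t → t ≤ 1 →
      fderiv ℝ F ((p + u) + t • v) v - fderiv ℝ F (p + t • v) v ≤ 0 := by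
    intro t ht0 ht1
    have hanti : AntitoneOn (fun s : ℝ => fderiv ℝ F ((p + t • v) + s • u) v) (Icc 0 1) := by
      refine antitoneOn_of_deriv_nonpos (convex_Icc (0:ℝ) 1) ?_ ?_ ?_
      · exact (Differentiable.continuous fun s => (hkd t s).differentiableAt).continuousOn
      · exact fun s _ => ((hkd t s).differentiableAt).differentiableWithinAt
      · intro s hsI
        rw [interior_Icc] at hsI
        rw [(hkd t s).deriv]
        have hzmem : (p + t • v) + s • u ∈ Icc (0:Fin n → ℝ) 1 := by
          rw [add_right_comm]
          exact hmem s t hsI.1.le hsI.2.le ht0 ht1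
        exact hB _ hzmem
    have h01 := hanti (left_mem_Icc.2 zero_le_one) (right_mem_Icc.2 zero_le_one) zero_le_one
    simp only [zero_smul, add_zero, one_smul] at h01
    rw [add_right_comm] at h01
    linarith
  have hhd : ∀ t : ℝ, HasDerivAt (fun t => F ((p + u) + t • v) - F (p + t • v))
      (fderiv ℝ F ((p + u) + t • v) v - fderiv ℝ F (p + t • v) v) t :=
    fun t => (hasDerivAt_line hd1 (p + u) v t).sub (hasDerivAt_line hd1 p v t)
  have hantih : AntitoneOn (fun t : ℝ => F ((p + u) + t • v) - F (p + t • v)) (Icc 0 1) := by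
    refine antitoneOn_of_deriv_nonpos (convex_Icc (0:ℝ) 1) ?_ ?_ ?_
    · exact (Differentiable.continuous fun t => (hhd t).differentiableAt).continuousOn
    · exact fun t _ => ((hhd t).differentiableAt).differentiableWithinAt
    · intro t htI
      rw [interior_Icc] at htI
      rw [(hhd t).deriv]
      exact hh' t htI.1.le htI.2.le
  have hfin := hantih (left_mem_Icc.2 zero_le_one) (right_mem_Icc.2 zero_le_one) zero_le_one
  simp only [zero_smul, add_zero, one_smul] at hfin
  have h1 : (p + u) + v = p + u + v := by abel
  rw [h1] at hfin
  rw [ge_iff_le, hsupv, hxp, hyp]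
  linarith

lemma contH (hF : ContDiff ℝ 2 F) (c d : Fin n → ℝ) :
    Continuous fun z => fderiv ℝ (fderiv ℝ F) z c d :=
  (ContinuousLinearMap.apply ℝ ℝ d).continuous.comp
    ((ContinuousLinearMap.apply ℝ ((Fin n → ℝ) →L[ℝ] ℝ) c).continuous.comp (cont2 hF))

lemma extendH (hF : ContDiff ℝ 2 F)
    (hH : ∀ z ∈ Ioo (0:Fin n → ℝ) 1, ∀ i j : Fin n, i ≠ j →
      fderiv ℝ (fderiv ℝ F) z (Pi.single j 1) (Pi.single i 1) ≤ 0) :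
    ∀ z ∈ Icc (0:Fin n → ℝ) 1, ∀ i j : Fin n, i ≠ j →
      fderiv ℝ (fderiv ℝ F) z (Pi.single j 1) (Pi.single i 1) ≤ 0 := by
  intro z hz i j hij
  have hmemIoo : ∀ t : ℝ, t ∈ Ioo (0:ℝ) 1 → t • (1 : Fin n → ℝ) ∈ Ioo (0:Fin n → ℝ) 1 := by
    intro t ht
    constructor
    · refine Pi.lt_def.2 ⟨Pi.le_def.2 fun k => ?_, i, ?_⟩
      · simpa using (mul_nonneg ht.1.le zero_le_one)
      · simpa using ht.1
    · refine Pi.lt_def.2 ⟨Pi.le_def.2 fun k => ?_, i, ?_⟩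
      · simpa using ht.2.le
      · simpa using ht.2
  by_cases hz0 : z = 0
  · subst hz0
    have htend : Filter.Tendsto
        (fun t : ℝ => fderiv ℝ (fderiv ℝ F) (t • (1 : Fin n → ℝ))
          (Pi.single j 1) (Pi.single i 1))
        (nhdsWithin 0 (Ioi (0:ℝ))) (nhds (fderiv ℝ (fderiv ℝ F) (0 : Fin n → ℝ)
          (Pi.single j 1) (Pi.single i 1))) := by
      have h1 : Filter.Tendsto (fun t : ℝ => t • (1 : Fin n → ℝ)) (nhds 0)
          (nhds (0 : Fin n → ℝ)) := by
        have h0 : Filter.Tendsto (fun t : ℝ => t • (1 : Fin n → ℝ)) (nhds 0)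
            (nhds ((0:ℝ) • (1 : Fin n → ℝ))) :=
          (continuous_id.smul (continuous_const (y := (1 : Fin n → ℝ)))).tendsto (0:ℝ)
        simpa using h0
      exact ((contH hF _ _).tendsto _).comp (h1.mono_left nhdsWithin_le_nhds)
    apply le_of_tendsto htend
    filter_upwards [Ioo_mem_nhdsGT_of_mem (⟨le_refl (0:ℝ), zero_lt_one⟩ : (0:ℝ) ∈ Ico (0:ℝ) 1)]
      with t htI
    exact hH _ (hmemIoo t htI) i j hij
  · by_cases hz1 : z = 1
    · subst hz1
      have htend : Filter.Tendsto
          (fun t : ℝ => fderiv ℝ (fderiv ℝ F) (t • (1 : Fin n → ℝ))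
            (Pi.single j 1) (Pi.single i 1))
          (nhdsWithin 1 (Iio (1:ℝ))) (nhds (fderiv ℝ (fderiv ℝ F) (1 : Fin n → ℝ)
            (Pi.single j 1) (Pi.single i 1))) := by
        have h1 : Filter.Tendsto (fun t : ℝ => t • (1 : Fin n → ℝ)) (nhds 1)
            (nhds (1 : Fin n → ℝ)) := by
          have h0 : Filter.Tendsto (fun t : ℝ => t • (1 : Fin n → ℝ)) (nhds 1)
              (nhds ((1:ℝ) • (1 : Fin n → ℝ))) :=
            (continuous_id.smul (continuous_const (y := (1 : Fin n → ℝ)))).tendsto (1:ℝ)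
          simpa using h0
        exact ((contH hF _ _).tendsto _).comp (h1.mono_left nhdsWithin_le_nhds)
      apply le_of_tendsto htend
      filter_upwards [Ioo_mem_nhdsLT_of_mem (⟨zero_lt_one, le_refl (1:ℝ)⟩ : (1:ℝ) ∈ Ioc (0:ℝ) 1)]
        with t htI
      exact hH _ (hmemIoo t htI) i j hij
    · refine hH z ⟨?_, ?_⟩ i j hij
      · exact lt_of_le_of_ne hz.1 (Ne.symm hz0)
      · exact lt_of_le_of_ne hz.2 hz1

end Stmt3Aux

theorem stmt_3 (n : ℕ) (F : (Fin n → ℝ) → ℝ) (hF : ContDiff ℝ 2 F) :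
    (∀ x y : Fin n → ℝ, x ∈ Set.Icc (0:Fin n → ℝ) 1 → y ∈ Set.Icc (0:Fin n → ℝ) 1 →
      F x + F y ≥ F (x ⊔ y) + F (x ⊓ y)) ↔
    (∀ x : Fin n → ℝ, x ∈ Set.Ioo (0:Fin n → ℝ) 1 → ∀ i j : Fin n, i ≠ j →
      fderiv ℝ (fun y => fderiv ℝ F y (Pi.single i 1)) x (Pi.single j 1) ≤ 0) := by
  have hd2 := Stmt3Aux.diff2 hF
  constructor
  · intro hsub x hx i j hij
    rw [Stmt3Aux.fderiv_clm_apply' hd2]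
    exact Stmt3Aux.forward hF hsub x ⟨hx.1.le, hx.2.le⟩ i j hij
  · intro hH x y hx hy
    have hH' : ∀ z ∈ Set.Ioo (0:Fin n → ℝ) 1, ∀ i j : Fin n, i ≠ j →
        fderiv ℝ (fderiv ℝ F) z (Pi.single j 1) (Pi.single i 1) ≤ 0 := by
      intro z hz i j hij
      have h := hH z hz i j hij
      rwa [Stmt3Aux.fderiv_clm_apply' hd2] at h
    exact Stmt3Aux.reverse hF (Stmt3Aux.extendH hF hH') hx hy
end

section
/- A function F : [0,1]ⁿ → ℝ is strong DR-submodular (satisfies diminishing returns along every coordinate with respect to the coordinatewise partial order) if and only if F is continuous submodular and concave along every coordinate. -/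
/-- Core: a continuous midpoint-concave function on `[0,1]` vanishing at the
endpoints is nonnegative on `[0,1]`. -/
lemma lemA_aux (φ : ℝ → ℝ) (hc : ContinuousOn φ (Set.Icc 0 1))
    (hm : ∀ s ∈ Set.Icc (0:ℝ) 1, ∀ t ∈ Set.Icc (0:ℝ) 1, φ s + φ t ≤ 2 * φ ((s + t) / 2))
    (h0 : φ 0 = 0) (h1 : φ 1 = 0) : ∀ t ∈ Set.Icc (0:ℝ) 1, 0 ≤ φ t := by
  by_contra hcon
  push_neg at hcon
  obtain ⟨t₁, ht₁, hneg⟩ := hcon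
  obtain ⟨t₂, ht₂, hmin⟩ := isCompact_Icc.exists_isMinOn (Set.nonempty_Icc.2 zero_le_one) hc
  have hmin' : ∀ t ∈ Set.Icc (0:ℝ) 1, φ t₂ ≤ φ t := fun t ht => hmin ht
  set m := φ t₂ with hm2
  have hm0 : m < 0 := lt_of_le_of_lt (hmin' t₁ ht₁) hneg
  set T := Set.Icc (0:ℝ) 1 ∩ φ ⁻¹' Set.Iic m with hT
  have hTclosed : IsClosed T := hc.preimage_isClosed_of_isClosed isClosed_Icc isClosed_Iic
  have hTne : T.Nonempty := ⟨t₂, ht₂, le_refl m⟩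
  have hTbdd : BddBelow T := ⟨0, fun u hu => hu.1.1⟩
  set t0 := sInf T with ht0def
  have ht0T : t0 ∈ T := hTclosed.csInf_mem hTne hTbdd
  have ht0I : t0 ∈ Set.Icc (0:ℝ) 1 := ht0T.1
  have hφt0 : φ t0 ≤ m := ht0T.2
  have ht0pos : 0 < t0 := by
    rcases eq_or_lt_of_le ht0I.1 with h | h
    · exfalso; rw [← h] at hφt0; rw [← h0] at hm0; linarith
    · exact h
  have ht0lt1 : t0 < 1 := by
    rcases eq_or_lt_of_le ht0I.2 with h | h
    · exfalso; rw [h] at hφt0; rw [← h1] at hm0; linarith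
    · exact h
  set ε := min t0 (1 - t0) with hε
  have hεpos : 0 < ε := lt_min ht0pos (by linarith)
  have hs : t0 - ε ∈ Set.Icc (0:ℝ) 1 := by
    constructor
    · have : ε ≤ t0 := min_le_left _ _
      linarith
    · linarith [ht0I.2]
  have ht : t0 + ε ∈ Set.Icc (0:ℝ) 1 := by
    constructor
    · linarith [ht0I.1]
    · have : ε ≤ 1 - t0 := min_le_right _ _
      linarith
  have hmid := hm _ hs _ ht
  have hmidpt : (t0 - ε + (t0 + ε)) / 2 = t0 := by ring
  rw [hmidpt] at hmid
  have h3 : m ≤ φ (t0 + ε) := hmin' _ ht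
  have h4 : φ (t0 - ε) ≤ m := by linarith
  have h5 : t0 ≤ t0 - ε := csInf_le hTbdd ⟨hs, h4⟩
  linarith

/-- A continuous midpoint-concave function on `[0,1]` is concave. -/
lemma lemB_aux {g : ℝ → ℝ} (hc : ContinuousOn g (Set.Icc 0 1))
    (hm : ∀ s ∈ Set.Icc (0:ℝ) 1, ∀ t ∈ Set.Icc (0:ℝ) 1, g s + g t ≤ 2 * g ((s + t) / 2)) :
    ConcaveOn ℝ (Set.Icc 0 1) g := by
  refine ⟨convex_Icc 0 1, ?_⟩
  intro x hx y hy p q hp hq hpq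
  simp only [smul_eq_mul]
  set φ : ℝ → ℝ := fun t => g (x + t * (y - x)) - ((1 - t) * g x + t * g y) with hφ
  have hmap : ∀ t ∈ Set.Icc (0:ℝ) 1, x + t * (y - x) ∈ Set.Icc (0:ℝ) 1 := by
    intro t ht
    constructor <;> nlinarith [hx.1, hx.2, hy.1, hy.2, ht.1, ht.2]
  have hφc : ContinuousOn φ (Set.Icc 0 1) := by
    apply ContinuousOn.sub
    · exact hc.comp (Continuous.continuousOn (by continuity)) hmap
    · exact Continuous.continuousOn (by continuity)
  have hφm : ∀ s ∈ Set.Icc (0:ℝ) 1, ∀ t ∈ Set.Icc (0:ℝ) 1, φ s + φ t ≤ 2 * φ ((s + t) / 2) := by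
    intro s hs t ht
    have h := hm _ (hmap s hs) _ (hmap t ht)
    have e : (x + s * (y - x) + (x + t * (y - x))) / 2 = x + ((s + t) / 2) * (y - x) := by ring
    rw [e] at h
    simp only [hφ]
    nlinarith [h]
  have hφ0 : φ 0 = 0 := by simp [hφ]
  have hφ1 : φ 1 = 0 := by
    have e : x + 1 * (y - x) = y := by ring
    simp [hφ, e]
  have key := lemA_aux φ hφc hφm hφ0 hφ1 q ⟨hq, by linarith⟩
  have e2 : x + q * (y - x) = p * x + q * y := by
    have hp1 : p = 1 - q := by linarith
    rw [hp1]; ring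
  simp only [hφ] at key
  rw [e2] at key
  have hp1 : p = 1 - q := by linarith
  have hgx : (1 - q) * g x = p * g x := by rw [hp1]
  linarith

/-- Decreasing increments for a concave function on `[0,1]`. -/
lemma lemC_aux {g : ℝ → ℝ} (hg : ConcaveOn ℝ (Set.Icc 0 1) g) {a b δ : ℝ}
    (ha : 0 ≤ a) (hab : a ≤ b) (hδ : 0 ≤ δ) (hb : b + δ ≤ 1) :
    g (b + δ) - g b ≤ g (a + δ) - g a := by
  rcases eq_or_lt_of_le (le_trans hab (by linarith : b ≤ b + δ)) with heq | hlt
  · have hab' : a = b := by linarith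
    have hδ0 : δ = 0 := by linarith
    rw [hab', hδ0]
  · set lam := (b - a) / (b + δ - a) with hlamdef
    have hd : 0 < b + δ - a := by linarith
    have hl0 : 0 ≤ lam := div_nonneg (by linarith) hd.le
    have hl1 : lam ≤ 1 := by rw [hlamdef, div_le_one hd]; linarith
    have hmemA : a ∈ Set.Icc (0:ℝ) 1 := ⟨ha, by linarith⟩
    have hmemB : b + δ ∈ Set.Icc (0:ℝ) 1 := ⟨by linarith, hb⟩
    have key : lam * (b + δ - a) = b - a := div_mul_cancel₀ _ hd.ne'
    have h1 := hg.2 hmemA hmemB hl0 (by linarith : (0:ℝ) ≤ 1 - lam) (by ring)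
    have h2 := hg.2 hmemA hmemB (by linarith : (0:ℝ) ≤ 1 - lam) hl0 (by ring)
    simp only [smul_eq_mul] at h1 h2
    have e1 : lam * a + (1 - lam) * (b + δ) = a + δ := by linear_combination -key
    have e2 : (1 - lam) * a + lam * (b + δ) = b := by linear_combination key
    rw [e1] at h1
    rw [e2] at h2
    linarith

theorem stmt_5 (n : ℕ) (F : (Fin n → ℝ) → ℝ)
    (hcont : ContinuousOn F (Set.Icc (0:Fin n → ℝ) 1)) :
    (∀ i : Fin n, ∀ x y : Fin n → ℝ, x ∈ Set.Icc (0:Fin n → ℝ) 1 →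
        y ∈ Set.Icc (0:Fin n → ℝ) 1 → x ≤ y → ∀ δ : ℝ, 0 ≤ δ → y i + δ ≤ 1 →
        F (Function.update x i (x i + δ)) - F x
          ≥ F (Function.update y i (y i + δ)) - F y) ↔
    ((∀ x y : Fin n → ℝ, x ∈ Set.Icc (0:Fin n → ℝ) 1 → y ∈ Set.Icc (0:Fin n → ℝ) 1 →
        F x + F y ≥ F (x ⊔ y) + F (x ⊓ y)) ∧
     (∀ i : Fin n, ∀ x : Fin n → ℝ, x ∈ Set.Icc (0:Fin n → ℝ) 1 →
        ConcaveOn ℝ (Set.Icc (0:ℝ) 1) (fun z => F (Function.update x i z)))) := by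
  constructor
  · intro hDR
    constructor
    · -- submodularity
      intro x y hx hy
      have hx0 : ∀ j, (0:ℝ) ≤ x j := fun j => hx.1 j
      have hx1 : ∀ j, x j ≤ 1 := fun j => hx.2 j
      have hy0 : ∀ j, (0:ℝ) ≤ y j := fun j => hy.1 j
      have hy1 : ∀ j, y j ≤ 1 := fun j => hy.2 j
      set low : ℕ → Fin n → ℝ := fun k j => if (j : ℕ) < k then x j else min (x j) (y j)
        with hlow
      set high : ℕ → Fin n → ℝ := fun k j => if (j : ℕ) < k then max (x j) (y j) else y j
        with hhigh
      have claim : ∀ k, k ≤ n → F (high k) - F (high 0) ≤ F (low k) - F (low 0) := by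
        intro k
        induction k with
        | zero => intro _; simp
        | succ k ih =>
          intro hk1
          have hkn : k < n := hk1
          have ihk := ih (Nat.le_of_lt hkn)
          set i : Fin n := ⟨k, hkn⟩ with hi
          have hik : (i : ℕ) = k := rfl
          set δ := x i - min (x i) (y i) with hδdef
          have hδ0 : 0 ≤ δ := by
            rw [hδdef]; have := min_le_left (x i) (y i); linarith
          have hlowmem : low k ∈ Set.Icc (0:Fin n → ℝ) 1 := by
            constructor <;> intro j <;> simp only [hlow, Pi.zero_apply, Pi.one_apply] <;>
              by_cases h : (j : ℕ) < k
            · rw [if_pos h]; exact hx0 j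
            · rw [if_neg h]; exact le_min (hx0 j) (hy0 j)
            · rw [if_pos h]; exact hx1 j
            · rw [if_neg h]; exact le_trans (min_le_left _ _) (hx1 j)
          have hhighmem : high k ∈ Set.Icc (0:Fin n → ℝ) 1 := by
            constructor <;> intro j <;> simp only [hhigh, Pi.zero_apply, Pi.one_apply] <;>
              by_cases h : (j : ℕ) < k
            · rw [if_pos h]; exact le_trans (hx0 j) (le_max_left _ _)
            · rw [if_neg h]; exact hy0 j
            · rw [if_pos h]; exact max_le (hx1 j) (hy1 j)
            · rw [if_neg h]; exact hy1 j
          have hle : low k ≤ high k := by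
            intro j
            simp only [hlow, hhigh]
            by_cases h : (j : ℕ) < k
            · rw [if_pos h, if_pos h]; exact le_max_left _ _
            · rw [if_neg h, if_neg h]; exact min_le_right _ _
          have hhki : high k i = y i := by
            simp only [hhigh]
            rw [if_neg (by omega)]
          have hlki : low k i = min (x i) (y i) := by
            simp only [hlow]
            rw [if_neg (by omega)]
          have hbound : high k i + δ ≤ 1 := by
            rw [hhki, hδdef]
            rcases le_total (x i) (y i) with h | h
            · rw [min_eq_left h]; linarith [hy1 i]
            · rw [min_eq_right h]; linarith [hx1 i]
          have key := hDR i (low k) (high k) hlowmem hhighmem hle δ hδ0 hbound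
          have e1 : Function.update (low k) i (low k i + δ) = low (k + 1) := by
            funext j
            rcases eq_or_ne j i with rfl | hne
            · rw [Function.update_self, hlki, hδdef]
              simp only [hlow]
              rw [if_pos (by omega : (i : ℕ) < k + 1)]
              ring
            · rw [Function.update_of_ne hne]
              have hjk : (j : ℕ) ≠ k := fun h => hne (Fin.ext (by rw [h, hik]))
              simp only [hlow]
              by_cases hlt : (j : ℕ) < k
              · rw [if_pos hlt, if_pos (by omega)]
              · rw [if_neg hlt, if_neg (by omega)]
          have e2 : Function.update (high k) i (high k i + δ) = high (k + 1) := by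
            funext j
            rcases eq_or_ne j i with rfl | hne
            · rw [Function.update_self, hhki, hδdef]
              simp only [hhigh]
              rw [if_pos (by omega : (i : ℕ) < k + 1)]
              rcases le_total (x i) (y i) with h | h
              · rw [min_eq_left h, max_eq_right h]; ring
              · rw [min_eq_right h, max_eq_left h]; ring
            · rw [Function.update_of_ne hne]
              have hjk : (j : ℕ) ≠ k := fun h => hne (Fin.ext (by rw [h, hik]))
              simp only [hhigh]
              by_cases hlt : (j : ℕ) < k
              · rw [if_pos hlt, if_pos (by omega)]
              · rw [if_neg hlt, if_neg (by omega)]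
          rw [e1, e2] at key
          linarith
      have h0l : low 0 = x ⊓ y := by
        funext j
        simp only [hlow, Pi.inf_apply]
        rw [if_neg (Nat.not_lt_zero _)]
      have hnl : low n = x := by
        funext j
        simp only [hlow]
        rw [if_pos j.isLt]
      have h0h : high 0 = y := by
        funext j
        simp only [hhigh]
        rw [if_neg (Nat.not_lt_zero _)]
      have hnh : high n = x ⊔ y := by
        funext j
        simp only [hhigh, Pi.sup_apply]
        rw [if_pos j.isLt]
      have := claim n le_rfl
      rw [hnl, h0l, hnh, h0h] at this
      linarith
    · -- coordinatewise concavity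
      intro i x hx
      have hx0 : ∀ j, (0:ℝ) ≤ x j := fun j => hx.1 j
      have hx1 : ∀ j, x j ≤ 1 := fun j => hx.2 j
      have hupd : ∀ z : ℝ, z ∈ Set.Icc (0:ℝ) 1 →
          Function.update x i z ∈ Set.Icc (0:Fin n → ℝ) 1 := by
        intro z hz
        constructor <;> intro j <;> simp only [Pi.zero_apply, Pi.one_apply]
        · rcases eq_or_ne j i with rfl | hne
          · rw [Function.update_self]; exact hz.1
          · rw [Function.update_of_ne hne]; exact hx0 j
        · rcases eq_or_ne j i with rfl | hne
          · rw [Function.update_self]; exact hz.2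
          · rw [Function.update_of_ne hne]; exact hx1 j
      have hgc : ContinuousOn (fun z => F (Function.update x i z)) (Set.Icc 0 1) := by
        apply hcont.comp _ hupd
        apply Continuous.continuousOn
        apply continuous_pi
        intro j
        simp only [Function.update_apply]
        by_cases h : j = i
        · simpa [h] using continuous_id'
        · simpa [h] using continuous_const
      apply lemB_aux hgc
      intro s hs t ht
      set a := min s t with hadef
      set b := max s t with hbdef
      have hab : a ≤ b := min_le_max
      have ha0 : 0 ≤ a := le_min hs.1 ht.1
      have hb1 : b ≤ 1 := max_le hs.2 ht.2
      set δ := (b - a) / 2 with hδdef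
      have hδ0 : 0 ≤ δ := by rw [hδdef]; linarith
      have hmemmid : (a + b) / 2 ∈ Set.Icc (0:ℝ) 1 := ⟨by linarith, by linarith⟩
      have hmema : a ∈ Set.Icc (0:ℝ) 1 := ⟨ha0, by linarith⟩
      have hle : Function.update x i a ≤ Function.update x i ((a + b) / 2) := by
        intro j
        rcases eq_or_ne j i with rfl | hne
        · rw [Function.update_self, Function.update_self]; linarith
        · rw [Function.update_of_ne hne, Function.update_of_ne hne]
      have hbnd : Function.update x i ((a + b) / 2) i + δ ≤ 1 := by
        rw [Function.update_self, hδdef]; linarith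
      have key := hDR i (Function.update x i a) (Function.update x i ((a + b) / 2))
        (hupd a hmema) (hupd _ hmemmid) hle δ hδ0 hbnd
      rw [Function.update_self, Function.update_self, Function.update_idem,
        Function.update_idem] at key
      have ea : a + δ = (a + b) / 2 := by rw [hδdef]; ring
      have eb : (a + b) / 2 + δ = b := by rw [hδdef]; ring
      rw [ea, eb] at key
      have hst : a + b = s + t := min_add_max s t
      have hmid2 : (a + b) / 2 = (s + t) / 2 := by rw [hst]
      rw [hmid2] at key
      rcases le_total s t with h | h
      · rw [hadef, hbdef, min_eq_left h, max_eq_right h] at key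
        linarith
      · rw [hadef, hbdef, min_eq_right h, max_eq_left h] at key
        linarith
  · rintro ⟨hsub, hconc⟩ i x y hx hy hxy δ hδ h1
    have hx0 : ∀ j, (0:ℝ) ≤ x j := fun j => hx.1 j
    have hx1 : ∀ j, x j ≤ 1 := fun j => hx.2 j
    have hy0 : ∀ j, (0:ℝ) ≤ y j := fun j => hy.1 j
    have hy1 : ∀ j, y j ≤ 1 := fun j => hy.2 j
    have hxyj : ∀ j, x j ≤ y j := fun j => hxy j
    set A := Function.update x i (x i + δ) with hA
    set B := Function.update y i (x i) with hB
    have hxiδ : x i + δ ≤ 1 := by linarith [hxyj i]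
    have hAmem : A ∈ Set.Icc (0:Fin n → ℝ) 1 := by
      constructor <;> intro j <;> simp only [Pi.zero_apply, Pi.one_apply, hA]
      · rcases eq_or_ne j i with rfl | hne
        · rw [Function.update_self]; linarith [hx0 j]
        · rw [Function.update_of_ne hne]; exact hx0 j
      · rcases eq_or_ne j i with rfl | hne
        · rw [Function.update_self]; exact hxiδ
        · rw [Function.update_of_ne hne]; exact hx1 j
    have hBmem : B ∈ Set.Icc (0:Fin n → ℝ) 1 := by
      constructor <;> intro j <;> simp only [Pi.zero_apply, Pi.one_apply, hB]
      · rcases eq_or_ne j i with rfl | hne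
        · rw [Function.update_self]; exact hx0 j
        · rw [Function.update_of_ne hne]; exact hy0 j
      · rcases eq_or_ne j i with rfl | hne
        · rw [Function.update_self]; exact hx1 j
        · rw [Function.update_of_ne hne]; exact hy1 j
    have hsupAB : A ⊔ B = Function.update y i (x i + δ) := by
      funext j
      simp only [Pi.sup_apply, hA, hB]
      rcases eq_or_ne j i with rfl | hne
      · rw [Function.update_self, Function.update_self, Function.update_self]
        exact max_eq_left (by linarith)
      · rw [Function.update_of_ne hne, Function.update_of_ne hne, Function.update_of_ne hne]
        exact max_eq_right (hxyj j)
    have hinfAB : A ⊓ B = x := by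
      funext j
      simp only [Pi.inf_apply, hA, hB]
      rcases eq_or_ne j i with rfl | hne
      · rw [Function.update_self, Function.update_self]
        exact min_eq_right (by linarith)
      · rw [Function.update_of_ne hne, Function.update_of_ne hne]
        exact min_eq_left (hxyj j)
    have hstepA := hsub A B hAmem hBmem
    rw [hsupAB, hinfAB] at hstepA
    have hg := hconc i y hy
    have hstepB := lemC_aux hg (hx0 i) (hxyj i) hδ h1
    have hyy : Function.update y i (y i) = y := Function.update_eq_self i y
    rw [hyy] at hstepB
    simp only [hA, hB] at hstepA
    linarith
end

section
/- Let F : [0,1]ⁿ → ℝ be twice continuously differentiable with all Hessian entries nonpositive. Fix a coordinate i and X_{-i} ≤ Y_{-i}. Then the function f(z) = (∂F/∂x_i)(z, X_{-i})·(1-z) + (∂F/∂x_i)(z, Y_{-i})·z is monotone nonincreasing on [0,1]. -/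
theorem stmt_8 (n : ℕ) (F : (Fin n → ℝ) → ℝ) (hF : ContDiff ℝ 2 F)
    (hHess : ∀ x : Fin n → ℝ, x ∈ Set.Icc (0:Fin n → ℝ) 1 → ∀ i j : Fin n,
      fderiv ℝ (fun w => fderiv ℝ F w (Pi.single i 1)) x (Pi.single j 1) ≤ 0)
    (i : Fin n) (X Y : Fin n → ℝ)
    (hX : X ∈ Set.Icc (0:Fin n → ℝ) 1) (hY : Y ∈ Set.Icc (0:Fin n → ℝ) 1)
    (hXY : ∀ j, j ≠ i → X j ≤ Y j)
    (f : ℝ → ℝ)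
    (hf : ∀ z, f z = fderiv ℝ F (Function.update X i z) (Pi.single i 1) * (1 - z)
                   + fderiv ℝ F (Function.update Y i z) (Pi.single i 1) * z) :
    ∀ z₁ z₂ : ℝ, z₁ ∈ Set.Icc (0:ℝ) 1 → z₂ ∈ Set.Icc (0:ℝ) 1 → z₁ ≤ z₂ →
      f z₂ ≤ f z₁ := by
  intro z₁ z₂ hz₁ hz₂ hz
  set G : (Fin n → ℝ) → ℝ := fun w => fderiv ℝ F w (Pi.single i 1) with hGdef
  have hG : ContDiff ℝ 1 G := by
    exact (hF.fderiv_right (by norm_num)).clm_apply contDiff_const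
  have hGdiff : Differentiable ℝ G := hG.differentiable one_ne_zero
  -- Key: G is antitone on the box
  have key : ∀ P Q : Fin n → ℝ, P ∈ Set.Icc (0:Fin n → ℝ) 1 →
      Q ∈ Set.Icc (0:Fin n → ℝ) 1 → P ≤ Q → G Q ≤ G P := by
    intro P Q hP hQ hPQ
    set φ : ℝ → ℝ := fun t => G (P + t • (Q - P)) with hφdef
    have hmem : ∀ t ∈ Set.Icc (0:ℝ) 1, P + t • (Q - P) ∈ Set.Icc (0:Fin n → ℝ) 1 := by
      intro t ht
      have : P + t • (Q - P) = (1 - t) • P + t • Q := by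
        ring_nf
        module
      rw [this]
      exact (convex_Icc (0:Fin n → ℝ) 1) hP hQ (by linarith [ht.1, ht.2])
        (by linarith [ht.1, ht.2]) (by ring)
    have hderiv : ∀ t : ℝ, HasDerivAt φ (fderiv ℝ G (P + t • (Q - P)) (Q - P)) t := by
      intro t
      have hline : HasDerivAt (fun t : ℝ => P + t • (Q - P)) (Q - P) t := by
        simpa using ((hasDerivAt_id t).smul_const (Q - P)).const_add P
      exact ((hGdiff _).hasFDerivAt.comp_hasDerivAt t hline)
    have hdnonpos : ∀ t ∈ Set.Icc (0:ℝ) 1, fderiv ℝ G (P + t • (Q - P)) (Q - P) ≤ 0 := by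
      intro t ht
      have hpt := hmem t ht
      set pt := P + t • (Q - P) with hptdef
      have hsum : (Q - P) = ∑ j : Fin n, (Q j - P j) • (Pi.single j 1 : Fin n → ℝ) := by
        ext k
        rw [Finset.sum_apply]
        simp [Pi.single_apply, Finset.sum_ite_eq']
      rw [hsum, map_sum]
      apply Finset.sum_nonpos
      intro j _
      rw [map_smul]
      have h1 : fderiv ℝ G (P + t • (Q - P)) (Pi.single j 1) ≤ 0 := hHess _ hpt i j
      have h2 : 0 ≤ Q j - P j := sub_nonneg.mpr (hPQ j)
      exact smul_nonpos_of_nonneg_of_nonpos h2 h1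
    have hanti : AntitoneOn φ (Set.Icc (0:ℝ) 1) := by
      apply antitoneOn_of_deriv_nonpos (convex_Icc 0 1)
      · exact (hGdiff.continuous.comp
          (continuous_const.add (continuous_id.smul continuous_const))).continuousOn
      · intro t ht
        exact (hderiv t).differentiableAt.differentiableWithinAt
      · intro t ht
        rw [(hderiv t).deriv]
        exact hdnonpos t (interior_subset ht)
    have h01 : φ 1 ≤ φ 0 := hanti (Set.left_mem_Icc.mpr zero_le_one)
      (Set.right_mem_Icc.mpr zero_le_one) zero_le_one
    simpa [hφdef] using h01
  -- box membership of updated vectors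
  have hupd : ∀ (W : Fin n → ℝ), W ∈ Set.Icc (0:Fin n → ℝ) 1 → ∀ z ∈ Set.Icc (0:ℝ) 1,
      Function.update W i z ∈ Set.Icc (0:Fin n → ℝ) 1 := by
    intro W hW z hz
    constructor
    · intro j
      rcases eq_or_ne j i with h | h
      · subst h; simpa using hz.1
      · simpa [Function.update_of_ne h] using hW.1 j
    · intro j
      rcases eq_or_ne j i with h | h
      · subst h; simpa using hz.2
      · simpa [Function.update_of_ne h] using hW.2 j
  have hXz₁ := hupd X hX z₁ hz₁
  have hXz₂ := hupd X hX z₂ hz₂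
  have hYz₁ := hupd Y hY z₁ hz₁
  have hYz₂ := hupd Y hY z₂ hz₂
  have hle1 : Function.update X i z₁ ≤ Function.update X i z₂ := by
    intro j
    rcases eq_or_ne j i with h | h
    · subst h; simpa using hz
    · simp [Function.update_of_ne h]
  have hle2 : Function.update Y i z₁ ≤ Function.update Y i z₂ := by
    intro j
    rcases eq_or_ne j i with h | h
    · subst h; simpa using hz
    · simp [Function.update_of_ne h]
  have hle3 : Function.update X i z₁ ≤ Function.update Y i z₁ := by
    intro j
    rcases eq_or_ne j i with h | h
    · subst h; simp
    · simpa [Function.update_of_ne h] using hXY j h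
  have hg : G (Function.update X i z₂) ≤ G (Function.update X i z₁) :=
    key _ _ hXz₁ hXz₂ hle1
  have hh : G (Function.update Y i z₂) ≤ G (Function.update Y i z₁) :=
    key _ _ hYz₁ hYz₂ hle2
  have hgh : G (Function.update Y i z₁) ≤ G (Function.update X i z₁) :=
    key _ _ hXz₁ hYz₁ hle3
  rw [hf z₁, hf z₂]
  have h1 : (0:ℝ) ≤ 1 - z₂ := by linarith [hz₂.2]
  have h2 : (0:ℝ) ≤ z₂ := hz₂.1
  have h3 : (0:ℝ) ≤ z₂ - z₁ := by linarith
  nlinarith [mul_nonpos_of_nonneg_of_nonpos h1 (sub_nonpos.mpr hg),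
    mul_nonpos_of_nonneg_of_nonpos h2 (sub_nonpos.mpr hh),
    mul_nonpos_of_nonneg_of_nonpos h3 (sub_nonpos.mpr hgh)]
end

section
/- Let g, h : [0,1] → ℝ be differentiable with g(0)=0, h(1)=0. Suppose h - g is nonincreasing, g is concave, h is concave, and there exists z̃ ∈ [0,1] with α := g'(z̃) ≥ 0, β := -h'(z̃) ≥ 0, and α(1-z̃) = β·z̃. Then for every x* ∈ [0,1]: (1/2)g(z̃) + (1/2)h(z̃) - max(g(x*) - g(z̃), h(x*) - h(z̃)) ≥ 0. -/
lemma tangent_le (f : ℝ → ℝ) (hf : ConcaveOn ℝ (Set.Icc (0:ℝ) 1) f)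
    (hd : Differentiable ℝ f) {x z : ℝ} (hx : x ∈ Set.Icc (0:ℝ) 1)
    (hz : z ∈ Set.Icc (0:ℝ) 1) : f x ≤ f z + deriv f z * (x - z) := by
  rcases lt_trichotomy x z with hlt | heq | hgt
  · have := hf.deriv_le_slope hx hz hlt (hd z)
    rw [slope_def_field] at this
    have hne : z - x > 0 := by linarith
    rw [le_div_iff₀ hne] at this
    nlinarith
  · subst heq; simp
  · have := hf.slope_le_deriv hz hx hgt (hd z)
    rw [slope_def_field] at this
    have hne : x - z > 0 := by linarith
    rw [div_le_iff₀ hne] at this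
    nlinarith

theorem stmt_10 (g h : ℝ → ℝ) (hgdiff : Differentiable ℝ g) (hhdiff : Differentiable ℝ h)
    (hg0 : g 0 = 0) (hh1 : h 1 = 0)
    (hmono : ∀ z₁ z₂ : ℝ, z₁ ∈ Set.Icc (0:ℝ) 1 → z₂ ∈ Set.Icc (0:ℝ) 1 → z₁ ≤ z₂ →
      h z₂ - g z₂ ≤ h z₁ - g z₁)
    (hgconc : ConcaveOn ℝ (Set.Icc (0:ℝ) 1) g)
    (hhconc : ConcaveOn ℝ (Set.Icc (0:ℝ) 1) h)
    (ztil : ℝ) (hztil : ztil ∈ Set.Icc (0:ℝ) 1)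
    (hα : 0 ≤ deriv g ztil) (hβ : 0 ≤ -deriv h ztil)
    (heq : deriv g ztil * (1 - ztil) = -deriv h ztil * ztil) :
    ∀ x ∈ Set.Icc (0:ℝ) 1,
      (1/2) * g ztil + (1/2) * h ztil - max (g x - g ztil) (h x - h ztil) ≥ 0 := by
  intro x hx
  obtain ⟨hx0, hx1⟩ := hx
  obtain ⟨hz0, hz1⟩ := hztil
  set α := deriv g ztil with hαdef
  set β := -deriv h ztil with hβdef
  -- tangent line bounds
  have h1 : g 0 ≤ g ztil + α * (0 - ztil) :=
    tangent_le g hgconc hgdiff (by norm_num) ⟨hz0, hz1⟩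
  have h2 : h 1 ≤ h ztil + deriv h ztil * (1 - ztil) :=
    tangent_le h hhconc hhdiff (by norm_num) ⟨hz0, hz1⟩
  have h3 : g x ≤ g ztil + α * (x - ztil) :=
    tangent_le g hgconc hgdiff ⟨hx0, hx1⟩ ⟨hz0, hz1⟩
  have h4 : h x ≤ h ztil + deriv h ztil * (x - ztil) :=
    tangent_le h hhconc hhdiff ⟨hx0, hx1⟩ ⟨hz0, hz1⟩
  have hg1 : g ztil ≥ α * ztil := by rw [hg0] at h1; nlinarith
  have hh1' : h ztil ≥ β * (1 - ztil) := by rw [hh1] at h2; nlinarith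
  have hmax1 : g x - g ztil ≤ β * ztil := by nlinarith
  have hmax2 : h x - h ztil ≤ β * ztil := by nlinarith
  have hkey : α * ztil + β * (1 - ztil) ≥ 2 * (β * ztil) := by nlinarith [sq_nonneg (2*ztil - 1)]
  rcases max_cases (g x - g ztil) (h x - h ztil) with ⟨hm, _⟩ | ⟨hm, _⟩ <;> rw [hm] <;> nlinarith
end

section
/- Let F : [0,1]ⁿ → ℝ be continuous submodular. Let ẑ ∈ [0,1]ⁿ, x* ∈ [0,1]ⁿ, and for i ∈ {0,...,n} define O^{(i)} = (ẑ_1,...,ẑ_i, x*_{i+1},...,x*_n), X^{(i)} = (ẑ_1,...,ẑ_i, 0,...,0), Y^{(i)} = (ẑ_1,...,ẑ_i, 1,...,1). If ẑ_i ≥ x*_i, then F(O^{(i-1)}) - F(O^{(i)}) ≤ [F(x*_i, Y^{(i-1)}_{-i}) - F(ẑ_i, Y^{(i-1)}_{-i})]. -/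
theorem stmt_11 (n : ℕ) (F : (Fin n → ℝ) → ℝ)
    (hsub : ∀ x y : Fin n → ℝ, x ∈ Set.Icc (0:Fin n → ℝ) 1 → y ∈ Set.Icc (0:Fin n → ℝ) 1 →
      F x + F y ≥ F (x ⊔ y) + F (x ⊓ y))
    (zhat xstar : Fin n → ℝ)
    (hz : zhat ∈ Set.Icc (0:Fin n → ℝ) 1) (hx : xstar ∈ Set.Icc (0:Fin n → ℝ) 1)
    (i : Fin n) (hge : zhat i ≥ xstar i)
    (Oprev Yprev : Fin n → ℝ)
    (hO : Oprev = fun (j : Fin n) => if (j:ℕ) < (i:ℕ) then zhat j else xstar j)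
    (hYp : Yprev = fun (j : Fin n) => if (j:ℕ) < (i:ℕ) then zhat j else 1) :
    F Oprev - F (Function.update Oprev i (zhat i))
      ≤ F (Function.update Yprev i (xstar i)) - F (Function.update Yprev i (zhat i)) := by
  obtain ⟨hz0, hz1⟩ := hz
  obtain ⟨hx0, hx1⟩ := hx
  set x := Function.update Oprev i (zhat i) with hxdef
  set y := Function.update Yprev i (xstar i) with hydef
  have hxm : x ∈ Set.Icc (0:Fin n → ℝ) 1 := by
    constructor <;> intro j <;>
      simp only [hxdef, hO, Function.update_apply, Pi.zero_apply, Pi.one_apply] <;>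
      split_ifs <;> first
        | exact hz0 j | exact hz1 j | exact hx0 j | exact hx1 j
        | exact hz0 i | exact hz1 i | exact hx0 i | exact hx1 i | norm_num
  have hym : y ∈ Set.Icc (0:Fin n → ℝ) 1 := by
    constructor <;> intro j <;>
      simp only [hydef, hYp, Function.update_apply, Pi.zero_apply, Pi.one_apply] <;>
      split_ifs <;> first
        | exact hz0 j | exact hz1 j | exact hx0 j | exact hx1 j
        | exact hz0 i | exact hz1 i | exact hx0 i | exact hx1 i | norm_num
  have hsup : x ⊔ y = Function.update Yprev i (zhat i) := by
    funext j
    simp only [hxdef, hydef, hO, hYp, Pi.sup_apply, Function.update_apply]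
    by_cases hji : j = i
    · simp [hji, max_eq_left hge]
    · simp only [if_neg hji]
      split_ifs with h
      · exact max_self _
      · exact max_eq_right (hx1 j)
  have hinf : x ⊓ y = Oprev := by
    funext j
    simp only [hxdef, hydef, hO, hYp, Pi.inf_apply, Function.update_apply]
    by_cases hji : j = i
    · simp [hji, min_eq_right hge]
    · simp only [if_neg hji]
      split_ifs with h
      · exact min_self _
      · exact min_eq_left (hx1 j)
  have := hsub x y hxm hym
  rw [hsup, hinf] at this
  linarith
end

section
/- Let F : [0,1]ⁿ → ℝ be continuous submodular. With notation as before, if ẑ_i ≤ x*_i then F(O^{(i-1)}) - F(O^{(i)}) ≤ F(x*_i, X^{(i-1)}_{-i}) - F(ẑ_i, X^{(i-1)}_{-i}), where X^{(i-1)} = (ẑ_1,...,ẑ_{i-1}, 0,...,0) and O^{(j)} = (ẑ_1,...,ẑ_j, x*_{j+1},...,x*_n). -/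
theorem stmt_12 (n : ℕ) (F : (Fin n → ℝ) → ℝ)
    (hsub : ∀ x y : Fin n → ℝ, x ∈ Set.Icc (0:Fin n → ℝ) 1 → y ∈ Set.Icc (0:Fin n → ℝ) 1 →
      F x + F y ≥ F (x ⊔ y) + F (x ⊓ y))
    (zhat xstar : Fin n → ℝ)
    (hz : zhat ∈ Set.Icc (0:Fin n → ℝ) 1) (hx : xstar ∈ Set.Icc (0:Fin n → ℝ) 1)
    (i : Fin n) (hle : zhat i ≤ xstar i)
    (Oprev Xprev : Fin n → ℝ)
    (hO : Oprev = fun (j : Fin n) => if (j:ℕ) < (i:ℕ) then zhat j else xstar j)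
    (hXp : Xprev = fun (j : Fin n) => if (j:ℕ) < (i:ℕ) then zhat j else 0) :
    F Oprev - F (Function.update Oprev i (zhat i))
      ≤ F (Function.update Xprev i (xstar i)) - F (Function.update Xprev i (zhat i)) := by
  have hz0 : ∀ j, (0:ℝ) ≤ zhat j := fun j => hz.1 j
  have hz1 : ∀ j, zhat j ≤ 1 := fun j => hz.2 j
  have hx0 : ∀ j, (0:ℝ) ≤ xstar j := fun j => hx.1 j
  have hx1 : ∀ j, xstar j ≤ 1 := fun j => hx.2 j
  set a := Function.update Xprev i (xstar i) with ha
  set b := Function.update Oprev i (zhat i) with hb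
  have hmem : ∀ j, (0:ℝ) ≤ a j ∧ a j ≤ 1 ∧ (0:ℝ) ≤ b j ∧ b j ≤ 1 := by
    intro j
    by_cases hji : j = i
    · subst hji
      simp [ha, hb, Function.update_self]
      exact ⟨hx0 j, hx1 j, hz0 j, hz1 j⟩
    · simp only [ha, hb, Function.update_of_ne hji, hXp, hO]
      by_cases h : (j:ℕ) < (i:ℕ)
      · simp [h]; exact ⟨hz0 j, hz1 j, hz0 j, hz1 j⟩
      · simp [h]; exact ⟨hx0 j, hx1 j⟩
  have haI : a ∈ Set.Icc (0:Fin n → ℝ) 1 :=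
    ⟨fun j => (hmem j).1, fun j => (hmem j).2.1⟩
  have hbI : b ∈ Set.Icc (0:Fin n → ℝ) 1 :=
    ⟨fun j => (hmem j).2.2.1, fun j => (hmem j).2.2.2⟩
  have hsup : a ⊔ b = Oprev := by
    funext j
    by_cases hji : j = i
    · subst hji
      simp [ha, hb, hO, Function.update_self, max_eq_left hle]
    · have hii : ¬ (i:ℕ) < (i:ℕ) := lt_irrefl _
      simp only [Pi.sup_apply, ha, hb, Function.update_of_ne hji, hXp, hO]
      by_cases h : (j:ℕ) < (i:ℕ)
      · simp [h]
      · simp [h, max_eq_right (hx0 j)]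
  have hinf : a ⊓ b = Function.update Xprev i (zhat i) := by
    funext j
    by_cases hji : j = i
    · subst hji
      simp [ha, hb, Function.update_self, min_eq_right hle]
    · simp only [Pi.inf_apply, ha, hb, Function.update_of_ne hji, hXp, hO]
      by_cases h : (j:ℕ) < (i:ℕ)
      · simp [h]
      · simp [h, min_eq_left (hx0 j)]
  have := hsub a b haI hbI
  rw [hsup, hinf] at this
  linarith
end

section
/- Let F : [0,1]ⁿ → ℝ be continuous submodular and let Z_l maximize z ↦ F(z, Y^{(i-1)}_{-i}) over [0,1], with Y^{(i-1)}_{-i} ≥ X^{(i-1)}_{-i}. Then F(X^{(i)}) - F(X^{(i-1)}) ≥ F(ẑ_i, X^{(i-1)}_{-i}) - F(Z_l, X^{(i-1)}_{-i}), where X^{(i)} agrees with X^{(i-1)} except coordinate i is set to ẑ_i and coordinate i of X^{(i-1)} is 0. -/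
theorem stmt_13 (n : ℕ) (F : (Fin n → ℝ) → ℝ)
    (hsub : ∀ x y : Fin n → ℝ, x ∈ Set.Icc (0:Fin n → ℝ) 1 → y ∈ Set.Icc (0:Fin n → ℝ) 1 →
      F x + F y ≥ F (x ⊔ y) + F (x ⊓ y))
    (i : Fin n) (Xprev Yprev : Fin n → ℝ)
    (hXbox : Xprev ∈ Set.Icc (0:Fin n → ℝ) 1) (hYbox : Yprev ∈ Set.Icc (0:Fin n → ℝ) 1)
    (hXi : Xprev i = 0) (hYi : Yprev i = 1)
    (hXY : ∀ j, j ≠ i → Xprev j ≤ Yprev j)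
    (Zl : ℝ) (hZl : Zl ∈ Set.Icc (0:ℝ) 1)
    (hargmax : ∀ z ∈ Set.Icc (0:ℝ) 1,
      F (Function.update Yprev i z) ≤ F (Function.update Yprev i Zl))
    (zhat : ℝ) (hzhat : zhat ∈ Set.Icc (0:ℝ) 1) :
    F (Function.update Xprev i zhat) - F Xprev
      ≥ F (Function.update Xprev i zhat) - F (Function.update Xprev i Zl) := by
  obtain ⟨hX0, hX1⟩ := hXbox
  obtain ⟨hY0, hY1⟩ := hYbox
  obtain ⟨hZ0, hZ1⟩ := hZl
  have hxbox : Function.update Xprev i Zl ∈ Set.Icc (0:Fin n → ℝ) 1 := by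
    constructor <;> intro j <;> by_cases h : j = i <;>
      simp [h, Function.update, hZ0, hZ1] <;> [exact hX0 j; exact hX1 j]
  have hybox : Function.update Yprev i 0 ∈ Set.Icc (0:Fin n → ℝ) 1 := by
    constructor <;> intro j <;> by_cases h : j = i <;>
      simp [h, Function.update] <;> [exact hY0 j; exact hY1 j]
  have hsup : Function.update Xprev i Zl ⊔ Function.update Yprev i 0
      = Function.update Yprev i Zl := by
    funext j
    by_cases h : j = i
    · subst h; simp [Function.update, hZ0]
    · simp [Function.update, h, max_eq_right (hXY j h)]
  have hinf : Function.update Xprev i Zl ⊓ Function.update Yprev i 0 = Xprev := by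
    funext j
    by_cases h : j = i
    · subst h; simp [Function.update, hXi, hZ0]
    · simp [Function.update, h, min_eq_left (hXY j h)]
  have hkey := hsub _ _ hxbox hybox
  rw [hsup, hinf] at hkey
  have h0 := hargmax 0 ⟨le_refl 0, zero_le_one⟩
  linarith
end

section
/- Let g, h : [0,1] → ℝ and points P₁ = (g₁,h₁), P₂ = (g₂,h₂) with h₁ - g₁ ≥ h₂ - g₂, λ ∈ [0,1], and V as the two-point mixed-strategy utility V(g',h') = λ[(1/2)(g₁+h₁) - max(g'-g₁, h'-h₁)] + (1-λ)[(1/2)(g₂+h₂) - max(g'-g₂, h'-h₂)]. Then for any (g',h') with h' - g' ≤ h₂ - g₂, V(g',h') ≥ 0 if and only if g' ≤ λ((3/2)g₁ + (1/2)h₁) + (1-λ)((3/2)g₂ + (1/2)h₂). -/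
theorem stmt_15 (g₁ h₁ g₂ h₂ lam g' h' : ℝ)
    (hP : h₁ - g₁ ≥ h₂ - g₂) (hlam : lam ∈ Set.Icc (0:ℝ) 1)
    (hreg : h' - g' ≤ h₂ - g₂) :
    lam * ((1/2) * (g₁ + h₁) - max (g' - g₁) (h' - h₁))
      + (1 - lam) * ((1/2) * (g₂ + h₂) - max (g' - g₂) (h' - h₂)) ≥ 0
      ↔ g' ≤ lam * ((3/2) * g₁ + (1/2) * h₁) + (1 - lam) * ((3/2) * g₂ + (1/2) * h₂) := by
  rw [max_eq_left (by linarith), max_eq_left (by linarith)]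
  constructor <;> intro h <;> nlinarith [hlam.1, hlam.2]
end
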